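/- For the Euclidean case G = ℝⁿ with n ≥ 3 and any δ > 0, there exists C > 0 such that for every x ∈ ℝⁿ, ∫_{ℝⁿ} ‖x−y‖^{-(n−2)} · (1 + ‖y‖^{n+δ})^{-1} dy ≤ C / (1 + ‖x‖^{n−2}). -/

import Mathlib

open MeasureTheory


open MeasureTheory Metric Set Real
open scoped ENNReal

variable {E : Type*} [NormedAddCommGroup E] [NormedSpace ℝ E] [FiniteDimensional ℝ E]
  [MeasurableSpace E] [BorelSpace E] (μ : Measure E) [μ.IsAddHaarMeasure]

theorem zhang_map_neg : Measure.map (Neg.neg : E → E) μ = μ := by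
  have h := Measure.map_addHaar_smul μ (r := (-1:ℝ)) (by norm_num)
  have h2 : ((-1:ℝ) • · : E → E) = (Neg.neg : E → E) := by
    funext z; simp
  rw [h2] at h
  simpa [abs_pow] using h

theorem zhang_map_sub_left (x : E) : Measure.map (fun y => x - y) μ = μ := by
  have h1 : (fun y : E => x - y) = (fun z : E => x + z) ∘ (Neg.neg : E → E) := by
    funext y; simp [sub_eq_add_neg]
  rw [h1, ← Measure.map_map (measurable_const_add x) measurable_neg, zhang_map_neg,
    map_add_left_eq_self]

theorem zhang_lintegral_sub_left (x : E) {g : E → ℝ≥0∞} (hg : Measurable g) :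
    ∫⁻ y, g (x - y) ∂μ = ∫⁻ z, g z ∂μ := by
  rw [← lintegral_map hg (by fun_prop), zhang_map_sub_left]

open MeasureTheory Metric Set Real Module
open scoped ENNReal

variable {E : Type*} [NormedAddCommGroup E] [NormedSpace ℝ E] [FiniteDimensional ℝ E]
  [MeasurableSpace E] [BorelSpace E] (μ : Measure E) [μ.IsAddHaarMeasure]

theorem zhang_scale {a r : ℝ} (ha : 0 ≤ a) (hr : 0 < r) :
    ∫⁻ z in ball (0:E) r, ENNReal.ofReal (‖z‖ ^ (-a)) ∂μ
      = ENNReal.ofReal (r ^ ((finrank ℝ E : ℝ) - a)) *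
        ∫⁻ w in ball (0:E) 1, ENNReal.ofReal (‖w‖ ^ (-a)) ∂μ := by
  set g : E → ℝ≥0∞ := (ball (0:E) r).indicator (fun z => ENNReal.ofReal (‖z‖ ^ (-a))) with hgdef
  have hgm : Measurable g :=
    (Measurable.ennreal_ofReal (by fun_prop)).indicator measurableSet_ball
  have hmap : Measure.map (r • · : E → E) μ
      = ENNReal.ofReal |(r ^ finrank ℝ E)⁻¹| • μ := by
    simpa using Measure.map_addHaar_smul μ (ne_of_gt hr)
  have h1 : ∫⁻ z, g z ∂(Measure.map (r • · : E → E) μ) = ∫⁻ w, g (r • w) ∂μ :=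
    lintegral_map hgm (by fun_prop)
  have h2 : ∀ w : E, g (r • w) =
      ENNReal.ofReal (r ^ (-a)) * (ball (0:E) 1).indicator
        (fun w => ENNReal.ofReal (‖w‖ ^ (-a))) w := by
    intro w
    have hmem : r • w ∈ ball (0:E) r ↔ w ∈ ball (0:E) 1 := by
      simp only [mem_ball_zero_iff, norm_smul, Real.norm_eq_abs, abs_of_pos hr]
      constructor
      · intro h; nlinarith [norm_nonneg w]
      · intro h; nlinarith [norm_nonneg w]
    by_cases hw : w ∈ ball (0:E) 1
    · rw [hgdef]
      simp only [indicator_of_mem (hmem.mpr hw), indicator_of_mem hw]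
      rw [← ENNReal.ofReal_mul (by positivity)]
      congr 1
      rw [norm_smul, Real.norm_eq_abs, abs_of_pos hr, Real.mul_rpow hr.le (norm_nonneg w)]
    · rw [hgdef]
      simp [indicator_of_notMem (fun h => hw (hmem.mp h)), indicator_of_notMem hw]
  have h3 : ∫⁻ w, g (r • w) ∂μ
      = ENNReal.ofReal (r ^ (-a)) * ∫⁻ w in ball (0:E) 1, ENNReal.ofReal (‖w‖ ^ (-a)) ∂μ := by
    simp_rw [h2]
    rw [lintegral_const_mul _ ((Measurable.ennreal_ofReal (by fun_prop)).indicator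
      measurableSet_ball), lintegral_indicator measurableSet_ball]
  have h4 : ∫⁻ z, g z ∂(Measure.map (r • · : E → E) μ)
      = ENNReal.ofReal |(r ^ finrank ℝ E)⁻¹| * ∫⁻ z, g z ∂μ := by
    rw [hmap]; simp [lintegral_smul_measure]
  have h5 : ∫⁻ z, g z ∂μ = ∫⁻ z in ball (0:E) r, ENNReal.ofReal (‖z‖ ^ (-a)) ∂μ := by
    rw [hgdef, lintegral_indicator measurableSet_ball]
  -- combine
  have key : ENNReal.ofReal |(r ^ finrank ℝ E)⁻¹| *
      ∫⁻ z in ball (0:E) r, ENNReal.ofReal (‖z‖ ^ (-a)) ∂μ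
      = ENNReal.ofReal (r ^ (-a)) * ∫⁻ w in ball (0:E) 1, ENNReal.ofReal (‖w‖ ^ (-a)) ∂μ := by
    rw [← h5, ← h4, h1, h3]
  have hrn : (0:ℝ) < r ^ finrank ℝ E := pow_pos hr _
  have habs : |(r ^ finrank ℝ E)⁻¹| = (r ^ finrank ℝ E)⁻¹ := abs_of_pos (by positivity)
  have := congrArg (fun t => ENNReal.ofReal (r ^ (finrank ℝ E : ℕ)) * t) key
  simp only at this
  rw [← mul_assoc, ← ENNReal.ofReal_mul (by positivity), habs,
    mul_inv_cancel₀ (ne_of_gt hrn), ENNReal.ofReal_one, one_mul] at this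
  rw [this, ← mul_assoc, ← ENNReal.ofReal_mul (by positivity)]
  congr 2
  rw [← Real.rpow_natCast r (finrank ℝ E), ← Real.rpow_add hr, sub_eq_add_neg]

open MeasureTheory Metric Set Real Module
open scoped ENNReal

variable {E : Type*} [NormedAddCommGroup E] [NormedSpace ℝ E] [FiniteDimensional ℝ E]
  [MeasurableSpace E] [BorelSpace E] (μ : Measure E) [μ.IsAddHaarMeasure] [Nontrivial E]

theorem zhang_K1_finite {a : ℝ} (ha : 0 < a) (han : a < finrank ℝ E) :
    ∫⁻ w in ball (0:E) 1, ENNReal.ofReal (‖w‖ ^ (-a)) ∂μ < ∞ := by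
  set c : ℝ := (2:ℝ)⁻¹ with hc
  have hc0 : (0:ℝ) < c := by norm_num
  have hc1 : c < 1 := by norm_num
  set S : ℕ → Set E := fun k => ball (0:E) (c ^ k) \ ball (0:E) (c ^ (k+1)) with hS
  -- covering
  have hcover : ∀ w : E, w ∈ ball (0:E) 1 → w ≠ 0 → ∃ k, w ∈ S k := by
    intro w hw hw0
    have hwn : 0 < ‖w‖ := norm_pos_iff.mpr hw0
    have hex : ∃ m, c ^ (m+1) ≤ ‖w‖ := by
      obtain ⟨m, hm⟩ := exists_pow_lt_of_lt_one hwn hc1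
      exact ⟨m, le_trans (pow_le_pow_of_le_one hc0.le hc1.le (by omega)) hm.le⟩
    classical
    set k := Nat.find hex with hk
    have hk1 : c ^ (k+1) ≤ ‖w‖ := Nat.find_spec hex
    have hk2 : ‖w‖ < c ^ k := by
      rcases Nat.eq_zero_or_pos k with h0 | h0
      · rw [h0, pow_zero]; exact mem_ball_zero_iff.mp hw
      · have := Nat.find_min hex (m := k - 1) (by omega)
        push_neg at this
        have : ‖w‖ < c ^ (k - 1 + 1) := this
        rwa [Nat.sub_add_cancel h0] at this
    exact ⟨k, mem_ball_zero_iff.mpr hk2, fun h => absurd (mem_ball_zero_iff.mp h) (not_lt.mpr hk1)⟩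
  -- pointwise indicator bound
  have hind : (ball (0:E) 1).indicator (fun w => ENNReal.ofReal (‖w‖ ^ (-a)))
      ≤ (⋃ k, S k).indicator (fun w => ENNReal.ofReal (‖w‖ ^ (-a))) := by
    intro w
    by_cases hw : w ∈ ball (0:E) 1
    · rw [indicator_of_mem hw]
      by_cases hw0 : w = 0
      · simp [hw0, Real.zero_rpow (neg_ne_zero.mpr ha.ne')]
      · obtain ⟨k, hk⟩ := hcover w hw hw0
        rw [indicator_of_mem (mem_iUnion.mpr ⟨k, hk⟩)]
    · rw [indicator_of_notMem hw]; exact zero_le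
  calc ∫⁻ w in ball (0:E) 1, ENNReal.ofReal (‖w‖ ^ (-a)) ∂μ
      = ∫⁻ w, (ball (0:E) 1).indicator (fun w => ENNReal.ofReal (‖w‖ ^ (-a))) w ∂μ := by
        rw [lintegral_indicator measurableSet_ball]
    _ ≤ ∫⁻ w, (⋃ k, S k).indicator (fun w => ENNReal.ofReal (‖w‖ ^ (-a))) w ∂μ :=
        lintegral_mono hind
    _ = ∫⁻ w in ⋃ k, S k, ENNReal.ofReal (‖w‖ ^ (-a)) ∂μ := by
        rw [lintegral_indicator (MeasurableSet.iUnion (fun k =>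
          measurableSet_ball.diff measurableSet_ball))]
    _ ≤ ∑' k, ∫⁻ w in S k, ENNReal.ofReal (‖w‖ ^ (-a)) ∂μ := lintegral_iUnion_le _ _
    _ ≤ ∑' k, ENNReal.ofReal (c ^ (-a) ) * ENNReal.ofReal ((c ^ ((finrank ℝ E : ℝ) - a))) ^ k
          * μ (ball (0:E) 1) := by
        refine ENNReal.tsum_le_tsum fun k => ?_
        have hbound : ∀ w ∈ S k, ENNReal.ofReal (‖w‖ ^ (-a))
            ≤ ENNReal.ofReal ((c ^ (k+1)) ^ (-a)) := by
          intro w hw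
          have h1 : c ^ (k+1) ≤ ‖w‖ := not_lt.mp (fun h => hw.2 (mem_ball_zero_iff.mpr h))
          exact ENNReal.ofReal_le_ofReal
            (Real.rpow_le_rpow_of_nonpos (by positivity) h1 (by linarith))
        calc ∫⁻ w in S k, ENNReal.ofReal (‖w‖ ^ (-a)) ∂μ
            ≤ ∫⁻ _ in S k, ENNReal.ofReal ((c ^ (k+1)) ^ (-a)) ∂μ :=
              setLIntegral_mono' (measurableSet_ball.diff measurableSet_ball) hbound
          _ = ENNReal.ofReal ((c ^ (k+1)) ^ (-a)) * μ (S k) := by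
              rw [setLIntegral_const]
          _ ≤ ENNReal.ofReal ((c ^ (k+1)) ^ (-a)) * μ (ball (0:E) (c ^ k)) := by
              gcongr
              exact fun w hw => hw.1
          _ = ENNReal.ofReal ((c ^ (k+1)) ^ (-a)) *
                (ENNReal.ofReal ((c ^ k) ^ finrank ℝ E) * μ (ball (0:E) 1)) := by
              rw [μ.addHaar_ball (0:E) (by positivity)]
          _ ≤ ENNReal.ofReal (c ^ (-a)) * ENNReal.ofReal ((c ^ ((finrank ℝ E : ℝ) - a))) ^ k
                * μ (ball (0:E) 1) := by
              rw [← mul_assoc, ← ENNReal.ofReal_pow (by positivity),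
                ← ENNReal.ofReal_mul (by positivity), ← ENNReal.ofReal_mul (by positivity)]
              refine mul_le_mul_left (ENNReal.ofReal_le_ofReal (le_of_eq ?_)) _
              have e1 : ((c:ℝ) ^ (k+1)) ^ (-a) = c ^ ((((k:ℝ))+1) * (-a)) := by
                rw [← Real.rpow_natCast c (k+1), ← Real.rpow_mul hc0.le]
                push_cast; ring_nf
              have e2 : ((c:ℝ) ^ k) ^ (finrank ℝ E) = c ^ ((k:ℝ) * (finrank ℝ E:ℝ)) := by
                rw [← Real.rpow_natCast (c ^ k) (finrank ℝ E), ← Real.rpow_natCast c k,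
                  ← Real.rpow_mul hc0.le]
              have e3 : ((c:ℝ) ^ ((finrank ℝ E : ℝ) - a)) ^ k
                  = c ^ (((finrank ℝ E : ℝ) - a) * (k:ℝ)) := by
                rw [← Real.rpow_natCast ((c:ℝ) ^ ((finrank ℝ E : ℝ) - a)) k,
                  ← Real.rpow_mul hc0.le]
              rw [e1, e2, e3, ← Real.rpow_add hc0, ← Real.rpow_add hc0]
              congr 1
              ring
    _ = ENNReal.ofReal (c ^ (-a)) * μ (ball (0:E) 1) *
          ∑' k, ENNReal.ofReal ((c ^ ((finrank ℝ E : ℝ) - a))) ^ k := by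
        rw [ENNReal.tsum_mul_right, ENNReal.tsum_mul_left]; ring
    _ < ∞ := by
        have hq : ENNReal.ofReal (c ^ ((finrank ℝ E : ℝ) - a)) < 1 := by
          rw [← ENNReal.ofReal_one]
          exact ENNReal.ofReal_lt_ofReal_iff_of_nonneg (by positivity) |>.mpr
            (Real.rpow_lt_one hc0.le hc1 (by linarith))
        rw [ENNReal.tsum_geometric]
        refine ENNReal.mul_lt_top (ENNReal.mul_lt_top ENNReal.ofReal_lt_top
          measure_ball_lt_top) ?_
        rw [ENNReal.inv_lt_top]
        exact tsub_pos_of_lt hq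

open scoped NNReal

set_option maxHeartbeats 1000000 in
/-- Euclidean case of the potential decay estimate (Zhang's Proposition 2.2):
for `n ≥ 3` and `δ > 0` there is `C > 0` with
`∫_{ℝⁿ} ‖x-y‖^{-(n-2)} (1 + ‖y‖^{n+δ})^{-1} dy ≤ C / (1 + ‖x‖^{n-2})`. -/
theorem stmt7 (n : ℕ) (hn : 3 ≤ n) (δ : ℝ) (hδ : 0 < δ) :
    ∃ C : ℝ, 0 < C ∧ ∀ x : EuclideanSpace ℝ (Fin n),
      (∫⁻ y : EuclideanSpace ℝ (Fin n), ENNReal.ofReal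
          (‖x - y‖ ^ (-((n : ℝ) - 2)) * (1 + ‖y‖ ^ ((n : ℝ) + δ))⁻¹))
        ≤ ENNReal.ofReal (C / (1 + ‖x‖ ^ ((n : ℝ) - 2))) := by
  haveI : NeZero n := ⟨by omega⟩
  set E := EuclideanSpace ℝ (Fin n) with hE
  have hfr' : finrank ℝ E = n := finrank_euclideanSpace_fin
  have hfr : (finrank ℝ E : ℝ) = n := by exact_mod_cast hfr'
  set a : ℝ := (n : ℝ) - 2 with hadef
  set b : ℝ := (n : ℝ) + δ with hbdef
  have hn3 : (3:ℝ) ≤ (n:ℝ) := by exact_mod_cast hn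
  have ha0 : 0 < a := by rw [hadef]; linarith
  have ha1 : 1 ≤ a := by rw [hadef]; linarith
  have hb0 : 0 < b := by rw [hbdef]; linarith
  have hab : a < b := by rw [hadef, hbdef]; linarith
  set K1 : ℝ≥0∞ := ∫⁻ w in Metric.ball (0:E) 1, ENNReal.ofReal (‖w‖ ^ (-a)) with hK1def
  set K2 : ℝ≥0∞ := ∫⁻ y : E, ENNReal.ofReal ((1 + ‖y‖) ^ (-b)) with hK2def
  have hK1 : K1 < ∞ := zhang_K1_finite volume ha0 (by rw [hfr, hadef]; linarith)
  have hK2 : K2 < ∞ := finite_integral_one_add_norm (by rw [hfr, hbdef]; linarith)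
  set D : ℝ≥0∞ := ENNReal.ofReal (2 ^ (a + b + δ)) * (K1 + K2) with hDdef
  have hD : D < ∞ :=
    ENNReal.mul_lt_top ENNReal.ofReal_lt_top (ENNReal.add_lt_top.mpr ⟨hK1, hK2⟩)
  refine ⟨2 * D.toReal + 1, by positivity, fun x => ?_⟩
  set s : ℝ := 1 + ‖x‖ with hsdef
  have hs1 : 1 ≤ s := by rw [hsdef]; have := norm_nonneg x; linarith
  have hs0 : 0 < s := by linarith
  set r : ℝ := s / 2 with hrdef
  have hr0 : 0 < r := by rw [hrdef]; linarith
  have hrhalf : 2⁻¹ ≤ r := by rw [hrdef]; linarith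
  -- pointwise bound on the second factor
  have hinv : ∀ y : E, (1 + ‖y‖ ^ b)⁻¹ ≤ 2 ^ b * (1 + ‖y‖) ^ (-b) := by
    intro y
    set t : ℝ := ‖y‖ with htdef
    have ht0 : 0 ≤ t := norm_nonneg y
    have h1 : (1 + t) ^ b ≤ 2 ^ b * (1 + t ^ b) := by
      rcases le_total t 1 with h | h
      · have : (1 + t) ^ b ≤ 2 ^ b := Real.rpow_le_rpow (by linarith) (by linarith) hb0.le
        have h2 : (1:ℝ) ≤ 1 + t ^ b := by have := Real.rpow_nonneg ht0 b; linarith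
        calc (1 + t) ^ b ≤ 2 ^ b := this
          _ ≤ 2 ^ b * (1 + t ^ b) := le_mul_of_one_le_right (by positivity) h2
      · have h2 : (1 + t) ^ b ≤ (2 * t) ^ b :=
          Real.rpow_le_rpow (by linarith) (by linarith) hb0.le
        have h3 : ((2:ℝ) * t) ^ b = 2 ^ b * t ^ b := Real.mul_rpow (by norm_num) ht0
        have h4 : t ^ b ≤ 1 + t ^ b := by linarith
        calc (1 + t) ^ b ≤ 2 ^ b * t ^ b := by rw [← h3]; exact h2
          _ ≤ 2 ^ b * (1 + t ^ b) := by nlinarith [Real.rpow_nonneg (by norm_num : (0:ℝ) ≤ 2) b]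
    have hpos1 : (0:ℝ) < 1 + t ^ b := by have := Real.rpow_nonneg ht0 b; linarith
    have hpos2 : (0:ℝ) < (1 + t) ^ b := by positivity
    rw [Real.rpow_neg (by linarith), inv_eq_one_div, inv_eq_one_div, mul_one_div,
      div_le_div_iff₀ hpos1 hpos2]
    nlinarith
  -- split the integral
  rw [← lintegral_add_compl
    (fun y : E => ENNReal.ofReal (‖x - y‖ ^ (-a) * (1 + ‖y‖ ^ b)⁻¹))
    (measurableSet_ball (x := x) (ε := r))]
  -- Region A
  have hA : (∫⁻ y in Metric.ball x r,
        ENNReal.ofReal (‖x - y‖ ^ (-a) * (1 + ‖y‖ ^ b)⁻¹))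
      ≤ ENNReal.ofReal (2 ^ (a + b + δ) * s ^ (-a)) * K1 := by
    have hpt : ∀ y ∈ Metric.ball x r,
        ENNReal.ofReal (‖x - y‖ ^ (-a) * (1 + ‖y‖ ^ b)⁻¹)
          ≤ ENNReal.ofReal (2 ^ b * r ^ (-b)) * ENNReal.ofReal (‖x - y‖ ^ (-a)) := by
      intro y hy
      have hdist : ‖x - y‖ < r := by
        rw [Metric.mem_ball, dist_eq_norm] at hy
        rwa [norm_sub_rev]
      have hylb : r ≤ 1 + ‖y‖ := by
        have h1 : ‖x‖ ≤ ‖y‖ + ‖x - y‖ := by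
          have hxy : y + (x - y) = x := by abel
          calc ‖x‖ = ‖y + (x - y)‖ := by rw [hxy]
            _ ≤ ‖y‖ + ‖x - y‖ := norm_add_le _ _
        have : s - r ≤ 1 + ‖y‖ := by rw [hsdef] at *; linarith
        have hsr : s - r = r := by rw [hrdef]; ring
        linarith [hsr ▸ this]
      have h2 : (1 + ‖y‖) ^ (-b) ≤ r ^ (-b) :=
        Real.rpow_le_rpow_of_nonpos hr0 hylb (by linarith)
      have h3 : (1 + ‖y‖ ^ b)⁻¹ ≤ 2 ^ b * r ^ (-b) := by
        calc (1 + ‖y‖ ^ b)⁻¹ ≤ 2 ^ b * (1 + ‖y‖) ^ (-b) := hinv y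
          _ ≤ 2 ^ b * r ^ (-b) := by nlinarith [Real.rpow_nonneg (by norm_num : (0:ℝ) ≤ 2) b]
      rw [ENNReal.ofReal_mul (by positivity), mul_comm]
      exact mul_le_mul_left (ENNReal.ofReal_le_ofReal h3) _
    calc (∫⁻ y in Metric.ball x r, ENNReal.ofReal (‖x - y‖ ^ (-a) * (1 + ‖y‖ ^ b)⁻¹))
        ≤ ∫⁻ y in Metric.ball x r,
            ENNReal.ofReal (2 ^ b * r ^ (-b)) * ENNReal.ofReal (‖x - y‖ ^ (-a)) :=
          setLIntegral_mono' measurableSet_ball hpt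
      _ = ENNReal.ofReal (2 ^ b * r ^ (-b)) *
            ∫⁻ y in Metric.ball x r, ENNReal.ofReal (‖x - y‖ ^ (-a)) :=
          lintegral_const_mul _ (by fun_prop)
      _ = ENNReal.ofReal (2 ^ b * r ^ (-b)) *
            ∫⁻ z in Metric.ball (0:E) r, ENNReal.ofReal (‖z‖ ^ (-a)) := by
          congr 1
          have hind : ∀ y : E, (Metric.ball x r).indicator
              (fun y => ENNReal.ofReal (‖x - y‖ ^ (-a))) y
              = (Metric.ball (0:E) r).indicator
                  (fun z => ENNReal.ofReal (‖z‖ ^ (-a))) (x - y) := by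
            intro y
            by_cases hy : y ∈ Metric.ball x r
            · have hmem : x - y ∈ Metric.ball (0:E) r := by
                rw [Metric.mem_ball, dist_eq_norm] at hy ⊢
                rw [sub_zero, norm_sub_rev]
                exact hy
              rw [Set.indicator_of_mem hy, Set.indicator_of_mem hmem]
            · have hmem : x - y ∉ Metric.ball (0:E) r := by
                rw [Metric.mem_ball, dist_eq_norm] at hy ⊢
                rw [sub_zero, norm_sub_rev]
                exact hy
              rw [Set.indicator_of_notMem hy, Set.indicator_of_notMem hmem]
          rw [← lintegral_indicator measurableSet_ball,
            ← lintegral_indicator measurableSet_ball]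
          simp_rw [hind]
          exact zhang_lintegral_sub_left volume x
            ((Measurable.ennreal_ofReal (by fun_prop)).indicator measurableSet_ball)
      _ = ENNReal.ofReal (2 ^ b * r ^ (-b)) * (ENNReal.ofReal (r ^ ((n:ℝ) - a)) * K1) := by
          rw [zhang_scale volume ha0.le hr0, hfr]
      _ ≤ ENNReal.ofReal (2 ^ (a + b + δ) * s ^ (-a)) * K1 := by
          rw [← mul_assoc, ← ENNReal.ofReal_mul (by positivity)]
          refine mul_le_mul_left (ENNReal.ofReal_le_ofReal ?_) _
          have e1 : (2:ℝ) ^ b * r ^ (-b) * r ^ ((n:ℝ) - a)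
              = 2 ^ b * (r ^ (-a) * r ^ (-δ)) := by
            rw [mul_assoc, ← Real.rpow_add hr0, ← Real.rpow_add hr0]
            congr 2
            rw [hadef, hbdef]; ring
          have e2 : r ^ (-δ) ≤ 2 ^ δ := by
            have h5 : ((2:ℝ)⁻¹) ^ (-δ) = 2 ^ δ := by
              rw [Real.inv_rpow (by norm_num), Real.rpow_neg (by positivity), inv_inv]
            calc r ^ (-δ) ≤ ((2:ℝ)⁻¹) ^ (-δ) :=
                Real.rpow_le_rpow_of_nonpos (by norm_num) hrhalf (by linarith)
              _ = 2 ^ δ := h5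
          have e3 : r ^ (-a) = 2 ^ a * s ^ (-a) := by
            rw [hrdef, Real.div_rpow hs0.le (by norm_num), div_eq_mul_inv,
              Real.rpow_neg (show (0:ℝ) ≤ 2 by norm_num) a, inv_inv]
            ring
          have e4 : (2:ℝ) ^ (a + b + δ) = 2 ^ a * 2 ^ b * 2 ^ δ := by
            rw [← Real.rpow_add (by norm_num), ← Real.rpow_add (by norm_num)]
          rw [e1, e3, e4]
          have h6 : (0:ℝ) ≤ s ^ (-a) := Real.rpow_nonneg hs0.le _
          have h7 : (0:ℝ) ≤ 2 ^ b * 2 ^ a * s ^ (-a) :=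
            mul_nonneg (mul_nonneg (Real.rpow_nonneg (by norm_num) b)
              (Real.rpow_nonneg (by norm_num) a)) h6
          calc (2:ℝ) ^ b * (2 ^ a * s ^ (-a) * r ^ (-δ))
              = (2 ^ b * 2 ^ a * s ^ (-a)) * r ^ (-δ) := by ring
            _ ≤ (2 ^ b * 2 ^ a * s ^ (-a)) * 2 ^ δ := mul_le_mul_of_nonneg_left e2 h7
            _ = 2 ^ a * 2 ^ b * 2 ^ δ * s ^ (-a) := by ring
  -- Region B
  have hB : (∫⁻ y in (Metric.ball x r)ᶜ,
        ENNReal.ofReal (‖x - y‖ ^ (-a) * (1 + ‖y‖ ^ b)⁻¹))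
      ≤ ENNReal.ofReal (2 ^ (a + b) * s ^ (-a)) * K2 := by
    have e3 : r ^ (-a) = 2 ^ a * s ^ (-a) := by
      rw [hrdef, Real.div_rpow hs0.le (by norm_num), div_eq_mul_inv,
        Real.rpow_neg (show (0:ℝ) ≤ 2 by norm_num) a, inv_inv]
      ring
    have hpt : ∀ y ∈ (Metric.ball x r)ᶜ,
        ENNReal.ofReal (‖x - y‖ ^ (-a) * (1 + ‖y‖ ^ b)⁻¹)
          ≤ ENNReal.ofReal (2 ^ (a + b) * s ^ (-a)) * ENNReal.ofReal ((1 + ‖y‖) ^ (-b)) := by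
      intro y hy
      have hdist : r ≤ ‖x - y‖ := by
        rw [Set.mem_compl_iff, Metric.mem_ball, dist_eq_norm, not_lt, norm_sub_rev] at hy
        exact hy
      have h1 : ‖x - y‖ ^ (-a) ≤ r ^ (-a) :=
        Real.rpow_le_rpow_of_nonpos hr0 hdist (by linarith)
      have h2 : ‖x - y‖ ^ (-a) * (1 + ‖y‖ ^ b)⁻¹
          ≤ (2 ^ a * s ^ (-a)) * (2 ^ b * (1 + ‖y‖) ^ (-b)) := by
        have hx1 : (0:ℝ) ≤ ‖x - y‖ ^ (-a) := Real.rpow_nonneg (norm_nonneg _) _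
        have hx2 : (0:ℝ) ≤ (1 + ‖y‖ ^ b)⁻¹ := by positivity
        have hx3 : (0:ℝ) ≤ 2 ^ b * (1 + ‖y‖) ^ (-b) := by positivity
        calc ‖x - y‖ ^ (-a) * (1 + ‖y‖ ^ b)⁻¹
            ≤ r ^ (-a) * (2 ^ b * (1 + ‖y‖) ^ (-b)) :=
              mul_le_mul h1 (hinv y) hx2 (Real.rpow_nonneg hr0.le _)
          _ = (2 ^ a * s ^ (-a)) * (2 ^ b * (1 + ‖y‖) ^ (-b)) := by rw [e3]
      calc ENNReal.ofReal (‖x - y‖ ^ (-a) * (1 + ‖y‖ ^ b)⁻¹)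
          ≤ ENNReal.ofReal ((2 ^ a * s ^ (-a)) * (2 ^ b * (1 + ‖y‖) ^ (-b))) :=
            ENNReal.ofReal_le_ofReal h2
        _ = ENNReal.ofReal (2 ^ (a + b) * s ^ (-a)) * ENNReal.ofReal ((1 + ‖y‖) ^ (-b)) := by
            rw [← ENNReal.ofReal_mul (by positivity)]
            congr 1
            rw [mul_mul_mul_comm, ← Real.rpow_add (by norm_num : (0:ℝ) < 2), mul_assoc]
    calc (∫⁻ y in (Metric.ball x r)ᶜ,
          ENNReal.ofReal (‖x - y‖ ^ (-a) * (1 + ‖y‖ ^ b)⁻¹))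
        ≤ ∫⁻ y in (Metric.ball x r)ᶜ,
            ENNReal.ofReal (2 ^ (a + b) * s ^ (-a)) * ENNReal.ofReal ((1 + ‖y‖) ^ (-b)) :=
          setLIntegral_mono' measurableSet_ball.compl hpt
      _ = ENNReal.ofReal (2 ^ (a + b) * s ^ (-a)) *
            ∫⁻ y in (Metric.ball x r)ᶜ, ENNReal.ofReal ((1 + ‖y‖) ^ (-b)) :=
          lintegral_const_mul _ (by fun_prop)
      _ ≤ ENNReal.ofReal (2 ^ (a + b) * s ^ (-a)) * K2 := by
          gcongr
          exact lintegral_mono' Measure.restrict_le_self le_rfl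
  -- combine
  have hsum : ENNReal.ofReal (2 ^ (a + b + δ) * s ^ (-a)) * K1 +
      ENNReal.ofReal (2 ^ (a + b) * s ^ (-a)) * K2 ≤ ENNReal.ofReal (s ^ (-a)) * D := by
    have h7 : (2:ℝ) ^ (a + b) ≤ 2 ^ (a + b + δ) :=
      Real.rpow_le_rpow_of_exponent_le (by norm_num) (by linarith)
    have h8 : ENNReal.ofReal (2 ^ (a + b) * s ^ (-a))
        ≤ ENNReal.ofReal (2 ^ (a + b + δ) * s ^ (-a)) := by
      apply ENNReal.ofReal_le_ofReal
      have := Real.rpow_nonneg hs0.le (-a)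
      nlinarith
    calc ENNReal.ofReal (2 ^ (a + b + δ) * s ^ (-a)) * K1 +
          ENNReal.ofReal (2 ^ (a + b) * s ^ (-a)) * K2
        ≤ ENNReal.ofReal (2 ^ (a + b + δ) * s ^ (-a)) * K1 +
          ENNReal.ofReal (2 ^ (a + b + δ) * s ^ (-a)) * K2 := by gcongr
      _ = ENNReal.ofReal (s ^ (-a)) * D := by
          rw [← mul_add, mul_comm ((2:ℝ) ^ (a + b + δ)) (s ^ (-a)),
            ENNReal.ofReal_mul (Real.rpow_nonneg hs0.le _), mul_assoc, hDdef]
  refine le_trans (add_le_add hA hB) (le_trans hsum ?_)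
  -- final conversion
  rw [← ENNReal.ofReal_toReal hD.ne, ENNReal.toReal_ofReal ENNReal.toReal_nonneg,
    ← ENNReal.ofReal_mul (Real.rpow_nonneg hs0.le _)]
  apply ENNReal.ofReal_le_ofReal
  have hDt : 0 ≤ D.toReal := ENNReal.toReal_nonneg
  have hden : (0:ℝ) < 1 + ‖x‖ ^ a := by
    have := Real.rpow_nonneg (norm_nonneg x) a; linarith
  rw [le_div_iff₀ hden]
  have h6 : (1 + ‖x‖ ^ a) * s ^ (-a) ≤ 2 := by
    have hsa : (0:ℝ) < s ^ a := Real.rpow_pos_of_pos hs0 _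
    have h9 : (1:ℝ) ≤ s ^ a := Real.one_le_rpow hs1 ha0.le
    have h10 : ‖x‖ ^ a ≤ s ^ a :=
      Real.rpow_le_rpow (norm_nonneg x) (by rw [hsdef]; linarith) ha0.le
    rw [Real.rpow_neg hs0.le, mul_inv_le_iff₀ hsa]
    linarith
  have h11 : s ^ (-a) * D.toReal * (1 + ‖x‖ ^ a) ≤ 2 * D.toReal := by
    have := mul_le_mul_of_nonneg_right h6 hDt
    nlinarith [Real.rpow_nonneg hs0.le (-a)]
  linarith
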